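/- Let R be a join-semilattice, X a type, and ε a multi-valued selection function on X that is both witnessing and upwards closed. Then for every type Y, every multi-valued selection function δ on Y, and every q : X × Y → R, one has (ε ⊗ δ)(q) = Rat(q, ε, δ). -/

import Mathlib

universe u

/-- A multi-valued selection function on `X` with outcomes in `R`:
a map `(X → R) → Finset X` whose values are all nonempty. -/
structure Sel (R X : Type u) [SemilatticeSup R] : Type u where
  fn : (X → R) → Finset X
  ne : ∀ k, (fn k).Nonempty

variable {R : Type u} [SemilatticeSup R]

/-- A selection function is witnessing if whenever `x` is selected in the context
obtained by taking pointwise joins over an indexing function `I`, there is a choice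
function `p` for `I` in whose induced context `x` is also selected. -/
def Witnessing {X : Type u} (ε : Sel R X) : Prop :=
  ∀ (I : X → Finset (X → R)) (hI : ∀ x, (I x).Nonempty) (x : X),
    x ∈ ε.fn (fun x' => (I x').sup' (hI x') (fun P => P x')) →
      ∃ p : X → X → R, (∀ x', p x' ∈ I x') ∧ x ∈ ε.fn (fun x' => p x' x')

/-- A selection function is upwards closed if whenever `x` is selected in the context
induced by a choice function `p` for an indexing function `I`, then `x` is also selected
in the context obtained by taking pointwise joins over `I`. -/
def UpwardsClosed {X : Type u} (ε : Sel R X) : Prop :=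
  ∀ (I : X → Finset (X → R)) (hI : ∀ x, (I x).Nonempty) (p : X → X → R),
    (∀ x', p x' ∈ I x') → ∀ x, x ∈ ε.fn (fun x' => p x' x') →
      x ∈ ε.fn (fun x' => (I x').sup' (hI x') (fun P => P x'))

/-- The product of selection functions. -/
def Sel.prod {X Y : Type u} (ε : Sel R X) (δ : Sel R Y) : Sel R (X × Y) where
  fn q :=
    ((ε.fn (fun x => (δ.fn (fun y => q (x, y))).sup' (δ.ne _) (fun y => q (x, y)))).sigma
      (fun x => δ.fn (fun y => q (x, y)))).map
      ⟨fun p => (p.1, p.2), fun a b h => by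
        cases a; cases b
        simp only [Prod.mk.injEq] at h
        obtain ⟨h1, h2⟩ := h
        subst h1; subst h2; rfl⟩
  ne q := by
    obtain ⟨x, hx⟩ := ε.ne (fun x => (δ.fn (fun y => q (x, y))).sup' (δ.ne _) (fun y => q (x, y)))
    obtain ⟨y, hy⟩ := δ.ne (fun y => q (x, y))
    exact ⟨(x, y), Finset.mem_map.2 ⟨⟨x, y⟩, Finset.mem_sigma.mpr ⟨hx, hy⟩, rfl⟩⟩

/-- A strategy profile `(σ₁, σ₂)` is rational. -/
def IsRational {X Y : Type u} (ε : Sel R X) (δ : Sel R Y) (q : X × Y → R)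
    (σ₁ : X) (σ₂ : X → Y) : Prop :=
  (∃ yf : X → Y, (∀ x, yf x ∈ δ.fn (fun y' => q (x, y'))) ∧
      σ₁ ∈ ε.fn (fun x => q (x, yf x))) ∧
  ∀ x, σ₂ x ∈ δ.fn (fun y' => q (x, y'))

/-- The set of rational plays. -/
def RatPlays {X Y : Type u} (ε : Sel R X) (δ : Sel R Y) (q : X × Y → R) : Set (X × Y) :=
  {p | ∃ σ₁ σ₂, IsRational ε δ q σ₁ σ₂ ∧ p = (σ₁, σ₂ σ₁)}

/-- Subgame perfect strategy profile. -/
def SubgamePerfect {X Y : Type u} (ε : Sel R X) (δ : Sel R Y) (q : X × Y → R)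
    (σ₁ : X) (σ₂ : X → Y) : Prop :=
  σ₁ ∈ ε.fn (fun x => q (x, σ₂ x)) ∧ ∀ x, σ₂ x ∈ δ.fn (fun y => q (x, y))

/-- The set of subgame perfect plays. -/
def SPPlays {X Y : Type u} (ε : Sel R X) (δ : Sel R Y) (q : X × Y → R) : Set (X × Y) :=
  {p | ∃ σ₁ σ₂, SubgamePerfect ε δ q σ₁ σ₂ ∧ p = (σ₁, σ₂ σ₁)}

/-- If `ε` is both witnessing and upwards closed then for every `Y`, `δ` and `q`,
`(ε ⊗ δ)(q) = Rat(q, ε, δ)`. -/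
theorem prod_eq_rat_of_witnessing_upwardsClosed {R X : Type u} [SemilatticeSup R]
    (ε : Sel R X) (hw : Witnessing ε) (hu : UpwardsClosed ε) :
    ∀ (Y : Type u) (δ : Sel R Y) (q : X × Y → R),
      ((ε.prod δ).fn q : Set (X × Y)) = RatPlays ε δ q := by
  classical
  intro Y δ q
  set I : X → Finset (X → R) :=
    fun x' => (δ.fn (fun y => q (x', y))).image (fun y => fun _ : X => q (x', y)) with hIdef
  have hI : ∀ x', (I x').Nonempty := fun x' => (δ.ne _).image _
  have hsup : ∀ x', (I x').sup' (hI x') (fun P => P x') =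
      (δ.fn (fun y => q (x', y))).sup' (δ.ne _) (fun y => q (x', y)) := by
    intro x'
    exact Finset.sup'_image _ _
  ext xy
  constructor
  · intro hmem
    simp only [Sel.prod, Finset.coe_map, Set.mem_image, Finset.mem_coe, Finset.mem_sigma,
      Function.Embedding.coeFn_mk] at hmem
    obtain ⟨⟨x, y⟩, ⟨hx0, hy0⟩, heq⟩ := hmem
    subst heq
    have hx' : x ∈ ε.fn (fun x' => (I x').sup' (hI x') (fun P => P x')) := by
      have h : (fun x' => (I x').sup' (hI x') (fun P => P x')) =
          (fun x' => (δ.fn (fun y => q (x', y))).sup' (δ.ne _) (fun y => q (x', y))) :=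
        funext hsup
      rw [h]
      exact hx0
    obtain ⟨p, hp, hxp⟩ := hw I hI x hx'
    have hyf : ∀ x', ∃ y', y' ∈ δ.fn (fun y'' => q (x', y'')) ∧ p x' = fun _ => q (x', y') := by
      intro x'
      have := hp x'
      rw [hIdef] at this
      simp only [Finset.mem_image] at this
      obtain ⟨y', hy', hpe⟩ := this
      exact ⟨y', hy', hpe.symm⟩
    choose yf hyf1 hyf2 using hyf
    refine ⟨x, Function.update yf x y, ⟨⟨yf, hyf1, ?_⟩, ?_⟩, ?_⟩
    · have h : (fun x' => q (x', yf x')) = (fun x' => p x' x') :=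
        funext fun x' => by rw [hyf2 x']
      rw [h]
      exact hxp
    · intro x'
      by_cases h : x' = x
      · subst h; rw [Function.update_self]; exact hy0
      · rw [Function.update_of_ne h]; exact hyf1 x'
    · rw [Function.update_self]; rfl
  · rintro ⟨σ₁, σ₂, ⟨⟨yf, hyf1, hσ₁⟩, hσ₂⟩, heq⟩
    subst heq
    have hp : ∀ x', (fun _ : X => q (x', yf x')) ∈ I x' := by
      intro x'
      rw [hIdef]
      exact Finset.mem_image_of_mem _ (hyf1 x')
    have hup := hu I hI (fun x' => fun _ => q (x', yf x')) hp σ₁ hσ₁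
    simp only [Sel.prod, Finset.coe_map, Set.mem_image, Finset.mem_coe, Finset.mem_sigma,
      Function.Embedding.coeFn_mk]
    refine ⟨⟨σ₁, σ₂ σ₁⟩, ⟨?_, hσ₂ σ₁⟩, rfl⟩
    have h : (fun x' => (I x').sup' (hI x') (fun P => P x')) =
        (fun x' => (δ.fn (fun y => q (x', y))).sup' (δ.ne _) (fun y => q (x', y))) :=
      funext hsup
    rw [← h]
    exact hup
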